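/- The number of hyposylvester classes of m-permutations of n is (m+1)^{n-1}. -/

import Mathlib

/-- One elementary hyposylvester rewriting. -/
def HypoStep {α : Type*} [LinearOrder α] (w w' : List α) : Prop :=
  (∃ (u v : List α) (a c : α), a < c ∧
      (∃ b ∈ u ++ [a, c] ++ v, a < b ∧ b < c) ∧
      w = u ++ [a, c] ++ v ∧ w' = u ++ [c, a] ++ v) ∨
  (∃ (u v x : List α) (a b : α), a < b ∧
      w = u ++ [a, b] ++ v ++ [a] ++ x ∧ w' = u ++ [b, a] ++ v ++ [a] ++ x)

namespace Hypo
open List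

variable {α : Type*} [LinearOrder α]

abbrev R (w w' : List α) : Prop := Relation.EqvGen HypoStep w w'

lemma hstep_ctx {w w' : List α} (p s : List α) (h : HypoStep w w') :
    HypoStep (p ++ w ++ s) (p ++ w' ++ s) := by
  rcases h with ⟨u, v, a, c, hac, ⟨b, hb, hb1, hb2⟩, rfl, rfl⟩ |
    ⟨u, v, x, a, b, hab, rfl, rfl⟩
  · refine Or.inl ⟨p ++ u, v ++ s, a, c, hac, ⟨b, ?_, hb1, hb2⟩, ?_, ?_⟩
    · simp only [mem_append] at hb ⊢; tauto
    · simp [List.append_assoc]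
    · simp [List.append_assoc]
  · refine Or.inr ⟨p ++ u, v, x ++ s, a, b, hab, ?_, ?_⟩ <;> simp [List.append_assoc]

lemma R_ctx {w w' : List α} (p s : List α) (h : R w w') : R (p ++ w ++ s) (p ++ w' ++ s) := by
  induction h with
  | rel x y hxy => exact Relation.EqvGen.rel _ _ (hstep_ctx p s hxy)
  | refl x => exact Relation.EqvGen.refl _
  | symm x y _ ih => exact Relation.EqvGen.symm _ _ ih
  | trans x y z _ _ ih1 ih2 => exact Relation.EqvGen.trans _ _ _ ih1 ih2

lemma step1 {u z : List α} {x y b : α} (hxy : x < y) (hb : b ∈ u ++ x :: y :: z)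
    (h1 : x < b) (h2 : b < y) : HypoStep (u ++ x :: y :: z) (u ++ y :: x :: z) := by
  refine Or.inl ⟨u, z, x, y, hxy, ⟨b, ?_, h1, h2⟩, ?_, ?_⟩ <;> simp_all

lemma step2 {u z : List α} {x y : α} (hxy : x < y) (hx : x ∈ z) :
    HypoStep (u ++ x :: y :: z) (u ++ y :: x :: z) := by
  obtain ⟨v, t, rfl⟩ := List.append_of_mem hx
  refine Or.inr ⟨u, v, t, x, y, hxy, ?_, ?_⟩ <;> simp [List.append_assoc]

/-- Swap two adjacent letters, in either orientation. -/
lemma R_swap {u z : List α} {x y : α}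
    (h : x = y ∨ (∃ b ∈ u ++ x :: y :: z, (x < b ∧ b < y) ∨ (y < b ∧ b < x)) ∨
      (x < y ∧ x ∈ z) ∨ (y < x ∧ y ∈ z)) :
    R (u ++ x :: y :: z) (u ++ y :: x :: z) := by
  rcases h with rfl | ⟨b, hb, ⟨h1, h2⟩ | ⟨h1, h2⟩⟩ | ⟨h1, h2⟩ | ⟨h1, h2⟩
  · exact Relation.EqvGen.refl _
  · exact Relation.EqvGen.rel _ _ (step1 (h1.trans h2) hb h1 h2)
  · refine Relation.EqvGen.symm _ _ (Relation.EqvGen.rel _ _ (step1 (h1.trans h2) ?_ h1 h2))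
    simp only [mem_append, mem_cons] at hb ⊢; tauto
  · exact Relation.EqvGen.rel _ _ (step2 h1 h2)
  · exact Relation.EqvGen.symm _ _ (Relation.EqvGen.rel _ _ (step2 h1 h2))

end Hypo
namespace Hypo2
open List Hypo

/-- takeWhile passes a block all of whose elements satisfy `p`. -/
lemma tw_all {α : Type*} {p : α → Bool} {l l' : List α} (h : ∀ x ∈ l, p x) :
    takeWhile p (l ++ l') = l ++ takeWhile p l' := by
  induction l with
  | nil => simp
  | cons x t ih =>
      simp only [cons_append, takeWhile_cons, h x (by simp), if_true,
        ih (fun y hy => h y (by simp [hy]))]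

/-- takeWhile stops inside a block containing a failing element. -/
lemma tw_stop {α : Type*} {p : α → Bool} {l : List α} (l' : List α)
    (h : ∃ x ∈ l, ¬ p x) : takeWhile p (l ++ l') = takeWhile p l := by
  induction l with
  | nil => simp at h
  | cons x t ih =>
      by_cases hpx : p x
      · obtain ⟨b, hb, hpb⟩ := h
        rcases mem_cons.1 hb with rfl | hb'
        · exact absurd hpx hpb
        · simp only [cons_append, takeWhile_cons, hpx, if_true, ih ⟨b, hb', hpb⟩]
      · simp [takeWhile_cons, hpx]

lemma tw_filter {α : Type*} {p q : α → Bool} (l : List α)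
    (h : ∀ x, q x = false → p x = true) :
    takeWhile p (filter q l) = filter q (takeWhile p l) := by
  induction l with
  | nil => simp
  | cons x t ih =>
      by_cases hq : q x
      · by_cases hp : p x <;> simp [filter_cons, hq, takeWhile_cons, hp, ih]
      · have hpx : p x := h x (by simpa using hq)
        simp [filter_cons, hq, takeWhile_cons, hpx, ih]

/-- The invariant: number of `a+1`'s after the last `a`. -/
def inv (a : ℕ) (w : List ℕ) : ℕ :=
  count (a+1) (takeWhile (fun z => decide (z ≠ a)) w.reverse)

lemma swap_inv {u v : List ℕ} {x y a : ℕ}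
    (h : a ∈ v ∨ ¬((x = a ∧ y = a+1) ∨ (x = a+1 ∧ y = a))) :
    inv a (u ++ x :: y :: v) = inv a (u ++ y :: x :: v) := by
  unfold inv
  have e1 : (u ++ x :: y :: v).reverse = v.reverse ++ [y, x] ++ u.reverse := by simp
  have e2 : (u ++ y :: x :: v).reverse = v.reverse ++ [x, y] ++ u.reverse := by simp
  rw [e1, e2]
  by_cases ha : a ∈ v
  · rw [append_assoc, append_assoc, tw_stop _ ⟨a, by simpa using ha, by simp⟩,
      tw_stop _ ⟨a, by simpa using ha, by simp⟩]
  · have hv : ∀ z ∈ v.reverse, (fun z => decide (z ≠ a)) z = true := by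
      intro z hz; simp only [decide_eq_true_eq]
      rintro rfl; exact ha (by simpa using hz)
    have hno := h.resolve_left ha
    rw [append_assoc, append_assoc, tw_all hv, tw_all hv]
    by_cases hx : x = a <;> by_cases hy : y = a
    · rw [hx, hy]
    · have hy1 : y ≠ a + 1 := fun hh => hno (Or.inl ⟨hx, hh⟩)
      simp [takeWhile_cons, hx, hy, hy1, count_append, count_cons]
    · have hx1 : x ≠ a + 1 := fun hh => hno (Or.inr ⟨hh, hy⟩)
      simp [takeWhile_cons, hx, hy, hx1, count_append, count_cons]
    · simp only [cons_append, nil_append]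
      rw [takeWhile_cons_of_pos (by simpa using hy), takeWhile_cons_of_pos (by simpa using hx),
        takeWhile_cons_of_pos (by simpa using hx), takeWhile_cons_of_pos (by simpa using hy)]
      simp [count_append, count_cons]
      omega

lemma hstep_inv {w w' : List ℕ} (h : HypoStep w w') (a : ℕ) : inv a w = inv a w' := by
  rcases h with ⟨u, v, x, y, hxy, ⟨b, _, hb1, hb2⟩, rfl, rfl⟩ |
    ⟨u, v, t, x, y, hxy, rfl, rfl⟩
  · have hcl : ¬((x = a ∧ y = a+1) ∨ (x = a+1 ∧ y = a)) := by
      rintro (⟨rfl, rfl⟩ | ⟨rfl, rfl⟩) <;> omega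
    simpa using swap_inv (u := u) (v := v) (Or.inr hcl)
  · have key : inv a (u ++ x :: y :: (v ++ [x] ++ t)) = inv a (u ++ y :: x :: (v ++ [x] ++ t)) := by
      by_cases hx : x = a
      · exact swap_inv (Or.inl (by simp [hx]))
      · refine swap_inv (Or.inr ?_)
        rintro (⟨rfl, rfl⟩ | ⟨rfl, rfl⟩)
        · exact hx rfl
        · omega
    simpa [List.append_assoc] using key

lemma R_inv {w w' : List ℕ} (h : R w w') (a : ℕ) : inv a w = inv a w' := by
  induction h with
  | rel x y hxy => exact hstep_inv hxy a
  | refl x => rfl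
  | symm x y _ ih => exact ih.symm
  | trans x y z _ _ ih1 ih2 => exact ih1.trans ih2

end Hypo2
namespace Hypo3
open List Hypo Hypo2

lemma R_ctx' {w w' : List ℕ} (p : List ℕ) (h : R w w') : R (p ++ w) (p ++ w') := by
  simpa using R_ctx p [] h

lemma R_trans {a b c : List ℕ} (h1 : R a b) (h2 : R b c) : R a c :=
  Relation.EqvGen.trans _ _ _ h1 h2

lemma R_refl (a : List ℕ) : R a a := Relation.EqvGen.refl _

lemma R_of_eq {a b : List ℕ} (h : a = b) : R a b := h ▸ R_refl a

/-- Move a single letter `c` rightwards past a list of letters `< c - 1`,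
using `c-1 ∈ p` as witness. -/
lemma moveR {c : ℕ} (hc : 1 ≤ c) {p : List ℕ} (hp : c - 1 ∈ p) (l r : List ℕ)
    (hl : ∀ x ∈ l, x < c - 1) :
    R (p ++ c :: (l ++ r)) (p ++ l ++ c :: r) := by
  induction l generalizing p with
  | nil => exact R_of_eq (by simp)
  | cons x t ih =>
      have s1 : R (p ++ c :: x :: (t ++ r)) (p ++ x :: c :: (t ++ r)) :=
        R_swap (Or.inr (Or.inl ⟨c - 1, by simp [hp],
          Or.inr ⟨hl x (by simp), by omega⟩⟩))
      have s2 := ih (p := p ++ [x]) (by simp [hp]) (fun y hy => hl y (by simp [hy]))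
      refine R_trans (R_trans (R_of_eq ?_) s1) (R_trans (R_of_eq ?_) (R_trans s2 (R_of_eq ?_))) <;>
        simp [List.append_assoc]

/-- Move a single letter `x < k` leftwards past a block of `k`'s,
using `k-1 ∈ Z` (later in the word). -/
lemma moveL_block {k : ℕ} {x : ℕ} (hx : x < k) {Z : List ℕ} (hZ : k - 1 ∈ Z)
    (p : List ℕ) (c : ℕ) :
    R (p ++ x :: (replicate c k ++ Z)) (p ++ replicate c k ++ x :: Z) := by
  induction c generalizing p with
  | zero => exact R_of_eq (by simp)
  | succ c ih =>
      have s1 : R (p ++ x :: k :: (replicate c k ++ Z)) (p ++ k :: x :: (replicate c k ++ Z)) := by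
        rcases eq_or_lt_of_le (Nat.le_of_lt_succ (by omega : x < (k-1) + 1)) with he | hlt
        · refine R_swap (Or.inr (Or.inr (Or.inl ⟨hx, ?_⟩)))
          simp [he, hZ]
        · exact R_swap (Or.inr (Or.inl ⟨k - 1, by simp [hZ], Or.inl ⟨hlt, by omega⟩⟩))
      have s2 := ih (p := p ++ [k])
      refine R_trans (R_trans (R_of_eq ?_) s1) (R_trans (R_of_eq ?_) (R_trans s2 (R_of_eq ?_))) <;>
        simp [replicate_succ, List.append_assoc]

/-- Phase 1: collect the `k`'s occurring after the last `k-1` at the far right end. -/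
lemma phase1 {k : ℕ} (hk : 1 ≤ k) (s : List ℕ) : ∀ (p : List ℕ), (k - 1) ∈ p →
    (∀ x ∈ s, x ≤ k ∧ x ≠ k - 1) →
    R (p ++ s) (p ++ s.filter (fun z => decide (z ≠ k)) ++ replicate (count k s) k) := by
  induction s with
  | nil => intro p _ _; exact R_of_eq (by simp)
  | cons x t ih =>
      intro p hp hs
      by_cases hxk : x = k
      · subst hxk
        have s2 := ih (p ++ [x]) (by simp [hp]) (fun y hy => hs y (by simp [hy]))
        have s3 := moveR hk (p := p) hp (t.filter (fun z => decide (z ≠ x)))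
          (replicate (count x t) x) (fun y hy => by
            have h1 := of_mem_filter hy
            have h2 := hs y (mem_cons_of_mem _ (mem_of_mem_filter hy))
            simp only [decide_eq_true_eq] at h1
            omega)
        refine R_trans (R_of_eq ?_) (R_trans s2 (R_trans (R_of_eq ?_) (R_trans s3 (R_of_eq ?_)))) <;>
          simp [List.append_assoc, filter_cons, count_cons, replicate_succ]
      · have s2 := ih (p ++ [x]) (by simp [hp]) (fun y hy => hs y (by simp [hy]))
        refine R_trans (R_of_eq ?_) (R_trans s2 (R_of_eq ?_)) <;>
          simp [List.append_assoc, filter_cons, hxk, count_cons]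

/-- Phase 2: collect the `k`'s occurring before the last `k-1` at the far left end. -/
lemma phase2 {k : ℕ} (p₀ : List ℕ) : ∀ (Z : List ℕ), (k - 1) ∈ Z → (∀ x ∈ p₀, x ≤ k) →
    R (p₀ ++ Z) (replicate (count k p₀) k ++ p₀.filter (fun z => decide (z ≠ k)) ++ Z) := by
  induction p₀ with
  | nil => intro Z _ _; exact R_of_eq (by simp)
  | cons x q ih =>
      intro Z hZ hq
      have s1 : R (x :: (q ++ Z))
          (x :: (replicate (count k q) k ++ (q.filter (fun z => decide (z ≠ k)) ++ Z))) := by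
        have := R_ctx' [x] (ih Z hZ (fun y hy => hq y (by simp [hy])))
        refine R_trans (R_of_eq ?_) (R_trans this (R_of_eq ?_)) <;> simp [List.append_assoc]
      by_cases hxk : x = k
      · subst hxk
        refine R_trans (R_of_eq ?_) (R_trans s1 (R_of_eq ?_)) <;>
          simp [List.append_assoc, count_cons, filter_cons, replicate_succ]
      · have hxlt : x < k := by
          have := hq x (by simp); omega
        have s3 := moveL_block hxlt (Z := q.filter (fun z => decide (z ≠ k)) ++ Z)
          (by simp [hZ]) [] (count k q)
        refine R_trans (R_of_eq ?_) (R_trans s1 (R_trans (R_trans (R_of_eq ?_) s3) (R_of_eq ?_))) <;>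
          simp [List.append_assoc, count_cons, filter_cons, hxk]

end Hypo3
namespace Hypo4
open List Hypo Hypo2 Hypo3

lemma last_occ {a : ℕ} {w : List ℕ} (h : a ∈ w) : ∃ p s, w = p ++ a :: s ∧ a ∉ s := by
  induction w with
  | nil => simp at h
  | cons x t ih =>
      by_cases ht : a ∈ t
      · obtain ⟨p, s, rfl, hs⟩ := ih ht
        exact ⟨x :: p, s, rfl, hs⟩
      · rcases mem_cons.1 h with rfl | h'
        · exact ⟨[], t, rfl, ht⟩
        · exact absurd h' ht

lemma inv_split {a : ℕ} {p s : List ℕ} (hs : a ∉ s) :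
    inv a (p ++ a :: s) = count (a+1) s := by
  unfold inv
  have e : (p ++ a :: s).reverse = s.reverse ++ (a :: p.reverse) := by simp
  have hall : ∀ z ∈ s.reverse, (fun z => decide (z ≠ a)) z = true := by
    intro z hz
    simp only [decide_eq_true_eq]
    rintro rfl
    exact hs (by simpa using hz)
  rw [e, tw_all hall, takeWhile_cons_of_neg (by simp)]
  simp [count_reverse]

/-- Main extraction: pull all copies of the top letter `k` to the two ends. -/
lemma extract {k : ℕ} (hk : 1 ≤ k) {w : List ℕ} (hw : ∀ x ∈ w, x ≤ k) (hm : k - 1 ∈ w) :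
    R w (replicate (count k w - inv (k-1) w) k ++ w.filter (fun z => decide (z ≠ k))
         ++ replicate (inv (k-1) w) k) ∧ inv (k-1) w ≤ count k w := by
  obtain ⟨p, s, rfl, hs⟩ := last_occ hm
  have hk1 : k - 1 + 1 = k := by omega
  have hinv : inv (k-1) (p ++ (k-1) :: s) = count k s := by rw [inv_split hs, hk1]
  have hss : ∀ x ∈ s, x ≤ k ∧ x ≠ k - 1 := fun x hx =>
    ⟨hw x (by simp [hx]), fun hh => hs (hh ▸ hx)⟩
  have h1 := phase1 hk s (p ++ [k-1]) (by simp) hss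
  have h2 := phase2 (k := k) p ((k-1) :: (s.filter (fun z => decide (z ≠ k)) ++ replicate (count k s) k))
    (by simp) (fun x hx => hw x (by simp [hx]))
  have hknk : ((k-1) ≠ k) := by omega
  have hcnt : count k (p ++ (k-1) :: s) = count k p + count k s := by
    simp [count_append, count_cons, hknk.symm, hknk]
  have hfil : (p ++ (k-1) :: s).filter (fun z => decide (z ≠ k)) =
      p.filter (fun z => decide (z ≠ k)) ++ (k-1) :: s.filter (fun z => decide (z ≠ k)) := by
    simp [filter_append, filter_cons, hknk]
  constructor
  · rw [hinv, hcnt]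
    have e1 : count k p + count k s - count k s = count k p := by omega
    rw [e1, hfil]
    refine R_trans (R_trans (R_of_eq ?_) h1) (R_trans (R_of_eq ?_) (R_trans h2 (R_of_eq ?_))) <;>
      simp [List.append_assoc]
  · rw [hinv, hcnt]; omega

/-- `m`-permutations over the alphabet `{0, ..., n-1}`. -/
def IsMPerm (m n : ℕ) (w : List ℕ) : Prop :=
  (∀ x ∈ w, x < n) ∧ ∀ t < n, count t w = m

/-- Canonical words. -/
def D (m : ℕ) (v : ℕ → ℕ) : ℕ → List ℕ
  | 0 => []
  | 1 => replicate m 0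
  | (k+2) => replicate (m - v k) (k+1) ++ D m v (k+1) ++ replicate (v k) (k+1)

lemma D_mem (m : ℕ) (v : ℕ → ℕ) : ∀ k, ∀ x ∈ D m v k, x < k := by
  intro k
  induction k with
  | zero => intro x hx; simp [D] at hx
  | succ n ih =>
      match n, ih with
      | 0, _ => intro x hx; simp [D] at hx; omega
      | (j+1), ih =>
          intro x hx
          simp only [D, mem_append, mem_replicate] at hx
          rcases hx with (⟨_, rfl⟩ | hx) | ⟨_, rfl⟩
          · omega
          · exact Nat.lt_succ_of_lt (ih x hx)
          · omega

lemma D_count (m : ℕ) (v : ℕ → ℕ) (hv : ∀ t, v t ≤ m) :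
    ∀ k, ∀ t < k, count t (D m v k) = m := by
  intro k
  induction k with
  | zero => omega
  | succ n ih =>
      match n, ih with
      | 0, _ => intro t ht; interval_cases t; simp [D]
      | (j+1), ih =>
          intro t ht
          have hDtop : count (j+1) (D m v (j+1)) = 0 :=
            count_eq_zero.2 (fun hc => by have := D_mem m v (j+1) _ hc; omega)
          simp only [D, count_append, count_replicate, beq_iff_eq]
          by_cases htop : t = j + 1
          · subst htop
            simp only [eq_self_iff_true, if_true, hDtop]
            have := hv j; omega
          · have ht' : t < j + 1 := by omega
            have hne : ¬ (j + 1 = t) := fun hh => htop hh.symm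
            simp only [if_neg hne, ih t ht']
            omega

lemma D_isMPerm (m : ℕ) (v : ℕ → ℕ) (hv : ∀ t, v t ≤ m) (k : ℕ) :
    IsMPerm m k (D m v k) :=
  ⟨D_mem m v k, fun t ht => D_count m v hv k t ht⟩

lemma D_congr (m : ℕ) {v v' : ℕ → ℕ} : ∀ k, (∀ t, t + 1 < k → v t = v' t) → D m v k = D m v' k := by
  intro k
  induction k with
  | zero => intro _; rfl
  | succ n ih =>
      match n, ih with
      | 0, _ => intro _; rfl
      | (j+1), ih =>
          intro h
          simp only [D, h j (by omega), ih (fun t ht => h t (by omega))]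

lemma inv_pad {t x a b : ℕ} {w : List ℕ} (hx1 : x ≠ t) (hx2 : x ≠ t + 1) (hm : t ∈ w) :
    inv t (replicate a x ++ w ++ replicate b x) = inv t w := by
  unfold inv
  have e : (replicate a x ++ w ++ replicate b x).reverse =
      replicate b x ++ (w.reverse ++ replicate a x) := by simp [reverse_replicate]
  rw [e, tw_all (by intro z hz; simp only [decide_eq_true_eq]
                    rw [eq_of_mem_replicate hz]; exact hx1),
    tw_stop _ ⟨t, by simp [hm], by simp⟩]
  simp [count_append, count_replicate, hx2]

lemma inv_top {k a b : ℕ} {w : List ℕ} (hmem : k ∈ w) (hw : ∀ x ∈ w, x ≤ k) :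
    inv k (replicate a (k+1) ++ w ++ replicate b (k+1)) = b := by
  unfold inv
  have e : (replicate a (k+1) ++ w ++ replicate b (k+1)).reverse =
      replicate b (k+1) ++ (w.reverse ++ replicate a (k+1)) := by simp [reverse_replicate]
  rw [e, tw_all (by intro z hz; simp only [decide_eq_true_eq]
                    rw [eq_of_mem_replicate hz]; omega),
    tw_stop _ ⟨k, by simp [hmem], by simp⟩]
  have h0 : count (k+1) (takeWhile (fun z => decide (z ≠ k)) w.reverse) = 0 := by
    refine count_eq_zero.2 (fun hc => ?_)
    have : (k+1) ∈ w.reverse := (takeWhile_prefix _).subset hc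
    have := hw _ (by simpa using this)
    omega
  rw [count_append, h0]
  simp [count_replicate]

lemma D_inv (m : ℕ) (hm : 1 ≤ m) (v : ℕ → ℕ) (hv : ∀ t, v t ≤ m) :
    ∀ k, ∀ t, t + 1 < k → inv t (D m v k) = v t := by
  intro k
  induction k with
  | zero => omega
  | succ n ih =>
      match n, ih with
      | 0, _ => omega
      | (j+1), ih =>
          intro t ht
          have hmemt : ∀ t' < j + 1, t' ∈ D m v (j+1) := by
            intro t' ht'
            have : 0 < count t' (D m v (j+1)) := by
              rw [D_count m v hv (j+1) t' ht']; omega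
            exact count_pos_iff.1 this
          by_cases htop : t = j
          · subst htop
            show inv t (replicate (m - v t) (t+1) ++ D m v (t+1) ++ replicate (v t) (t+1)) = v t
            exact inv_top (hmemt t (by omega)) (fun x hx => by
              have := D_mem m v (t+1) x hx; omega)
          · have ht' : t + 1 < j + 1 := by omega
            show inv t (replicate (m - v j) (j+1) ++ D m v (j+1) ++ replicate (v j) (j+1)) = v t
            rw [inv_pad (by omega) (by omega) (hmemt t (by omega))]
            exact ih t ht'

lemma inv_filter {a q : ℕ} (ha : a ≠ q) (ha1 : a + 1 ≠ q) (w : List ℕ) :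
    inv a (w.filter (fun z => decide (z ≠ q))) = inv a w := by
  unfold inv
  have hcond : ∀ x : ℕ, (fun z => decide (z ≠ q)) x = false → (fun z => decide (z ≠ a)) x = true := by
    intro x hx
    simp only [decide_eq_false_iff_not, not_not] at hx
    simp only [decide_eq_true_eq]
    omega
  rw [← filter_reverse, tw_filter _ hcond, count_filter (by simp [ha1])]

/-- Completeness: every `m`-permutation rewrites to the canonical word of its invariant. -/
lemma complete {m : ℕ} (hm : 1 ≤ m) : ∀ k (w : List ℕ), IsMPerm m k w →
    R w (D m (fun t => inv t w) k) := by
  intro k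
  induction k with
  | zero =>
      intro w hw
      have : w = [] := eq_nil_iff_forall_not_mem.2 (fun x hx => by have := hw.1 x hx; omega)
      subst this; exact R_refl _
  | succ n ih =>
      match n, ih with
      | 0, _ =>
          intro w hw
          have hall : ∀ b ∈ w, 0 = b := fun b hb => by have := hw.1 b hb; omega
          have hlen : w.length = m := by
            rw [← count_eq_length.2 hall]; exact hw.2 0 (by omega)
          have : w = replicate m 0 := eq_replicate_iff.2 ⟨hlen, fun b hb => (hall b hb).symm⟩
          subst this
          exact R_refl _
      | (j+1), ih =>
          intro w hw
          set K := j + 1 + 1 - 1 with hK  -- K = j+1, the top letter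
          have hKw : ∀ x ∈ w, x ≤ j + 1 := fun x hx => by have := hw.1 x hx; omega
          have hmem : j ∈ w := by
            refine count_pos_iff.1 ?_
            rw [hw.2 j (by omega)]; omega
          have hmem' : (j + 1) - 1 ∈ w := by simpa using hmem
          obtain ⟨hext, hle⟩ := extract (k := j+1) (by omega) hKw hmem'
          set w' := w.filter (fun z => decide (z ≠ j + 1)) with hw'
          have hw'perm : IsMPerm m (j+1) w' := by
            constructor
            · intro x hx
              have h1 := hw.1 x (mem_of_mem_filter hx)
              have h2 := of_mem_filter hx
              simp only [decide_eq_true_eq] at h2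
              omega
            · intro t ht
              rw [hw', count_filter (by simp; omega)]
              exact hw.2 t (by omega)
          have ihw' := ih w' hw'perm
          have hinveq : ∀ t, t + 1 < j + 1 → inv t w' = inv t w := by
            intro t ht
            exact inv_filter (by omega) (by omega) w
          have hDeq : D m (fun t => inv t w') (j+1) = D m (fun t => inv t w) (j+1) :=
            D_congr m (j+1) (fun t ht => hinveq t ht)
          have hcnt : count (j+1) w = m := hw.2 (j+1) (by omega)
          have hsimp : (j + 1) - 1 = j := by omega
          rw [hsimp] at hext hle
          have step2 := R_ctx (replicate (count (j+1) w - inv j w) (j+1))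
            (replicate (inv j w) (j+1)) ihw'
          refine R_trans hext (R_trans (R_trans (R_of_eq ?_) step2) (R_of_eq ?_))
          · simp [List.append_assoc]
          · rw [hDeq, hcnt]
            rfl

end Hypo4
namespace Hypo5
open List Hypo Hypo2 Hypo3 Hypo4

variable {n : ℕ}

def mval (w : List (Fin n)) : List ℕ := w.map Fin.val

lemma mval_inj : Function.Injective (mval (n := n)) :=
  List.map_injective_iff.2 Fin.val_injective

lemma mval_append (u v : List (Fin n)) : mval (u ++ v) = mval u ++ mval v := by
  simp [mval]

lemma hstep_map {w w' : List (Fin n)} (h : HypoStep w w') : HypoStep (mval w) (mval w') := by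
  rcases h with ⟨u, v, a, c, hac, ⟨b, hb, h1, h2⟩, rfl, rfl⟩ |
    ⟨u, v, t, a, b, hab, rfl, rfl⟩
  · refine Or.inl ⟨mval u, mval v, a.val, c.val, hac, ⟨b.val, ?_, h1, h2⟩, ?_, ?_⟩
    · simpa [mval] using List.mem_map_of_mem (f := Fin.val) hb
    · simp [mval]
    · simp [mval]
  · exact Or.inr ⟨mval u, mval v, mval t, a.val, b.val, hab, by simp [mval], by simp [mval]⟩

lemma R_map {w w' : List (Fin n)} (h : Relation.EqvGen HypoStep w w') : R (mval w) (mval w') := by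
  induction h with
  | rel x y hxy => exact Relation.EqvGen.rel _ _ (hstep_map hxy)
  | refl x => exact Relation.EqvGen.refl _
  | symm x y _ ih => exact Relation.EqvGen.symm _ _ ih
  | trans x y z _ _ ih1 ih2 => exact Relation.EqvGen.trans _ _ _ ih1 ih2

lemma hstep_perm {α : Type*} [LinearOrder α] {w w' : List α} (h : HypoStep w w') : w.Perm w' := by
  rcases h with ⟨u, v, a, c, _, _, rfl, rfl⟩ | ⟨u, v, t, a, b, _, rfl, rfl⟩
  · simpa using ((List.Perm.swap c a v).append_left u)
  · simp only [List.append_assoc, List.cons_append, List.nil_append]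
    exact ((List.Perm.swap b a (v ++ a :: t)).append_left u)

lemma R_perm {w w' : List ℕ} (h : R w w') : w.Perm w' := by
  induction h with
  | rel x y hxy => exact hstep_perm hxy
  | refl x => exact List.Perm.refl _
  | symm x y _ ih => exact ih.symm
  | trans x y z _ _ ih1 ih2 => exact ih1.trans ih2

lemma exists_preimage {x : List ℕ} (hx : ∀ a ∈ x, a < n) :
    ∃ X : List (Fin n), mval X = x := by
  refine ⟨x.pmap (fun a h => (⟨a, h⟩ : Fin n)) hx, ?_⟩
  rw [mval, List.map_pmap]
  simp

lemma lift_eqv {x y : List ℕ} (h : R x y) :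
    ∀ (X Y : List (Fin n)), mval X = x → mval Y = y → Relation.EqvGen HypoStep X Y := by
  induction h with
  | rel x y hxy =>
      intro X Y hX hY
      refine Relation.EqvGen.rel _ _ ?_
      rcases hxy with ⟨u, v, a, c, hac, ⟨b, hb, h1, h2⟩, hx, hy⟩ |
        ⟨u, v, t, a, b, hab, hx, hy⟩
      · rw [hx] at hX
        obtain ⟨P, V, rfl, hP, hV⟩ := List.map_eq_append_iff.1 hX
        obtain ⟨U, M, rfl, hU, hM⟩ := List.map_eq_append_iff.1 hP
        obtain ⟨A, M1, rfl, hA, hM1⟩ := List.map_eq_cons_iff.1 hM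
        obtain ⟨C, M2, rfl, hC, hM2⟩ := List.map_eq_cons_iff.1 hM1
        have hM2' : M2 = [] := List.map_eq_nil_iff.1 hM2
        subst hM2'
        obtain ⟨B, hBmem, hBval⟩ := List.mem_map.1 (show b ∈ List.map Fin.val (U ++ [A, C] ++ V) by
          rw [show List.map Fin.val (U ++ [A, C] ++ V) = u ++ [a, c] ++ v by
            simp only [map_append, hU, hV]
            simp [hA, hC]]
          exact hb)
        have hYeq : Y = U ++ [C, A] ++ V := by
          apply mval_inj
          rw [hY, hy]
          simp only [mval, map_append, hU, hV]
          simp [hA, hC]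
        refine Or.inl ⟨U, V, A, C, ?_, ⟨B, hBmem, ?_, ?_⟩, rfl, hYeq⟩
        · exact Fin.lt_def.2 (by rw [hA, hC]; exact hac)
        · exact Fin.lt_def.2 (by rw [hA, hBval]; exact h1)
        · exact Fin.lt_def.2 (by rw [hC, hBval]; exact h2)
      · rw [hx] at hX
        obtain ⟨P, T, rfl, hP, hT⟩ := List.map_eq_append_iff.1 hX
        obtain ⟨Q, A2l, rfl, hQ, hA2⟩ := List.map_eq_append_iff.1 hP
        obtain ⟨Q1, V, rfl, hQ1, hV⟩ := List.map_eq_append_iff.1 hQ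
        obtain ⟨U, M, rfl, hU, hM⟩ := List.map_eq_append_iff.1 hQ1
        obtain ⟨A, M1, rfl, hA, hM1⟩ := List.map_eq_cons_iff.1 hM
        obtain ⟨B, M2, rfl, hB, hM2⟩ := List.map_eq_cons_iff.1 hM1
        have hM2' : M2 = [] := List.map_eq_nil_iff.1 hM2
        subst hM2'
        obtain ⟨A', N1, rfl, hA', hN1⟩ := List.map_eq_cons_iff.1 hA2
        have hN1' : N1 = [] := List.map_eq_nil_iff.1 hN1
        subst hN1'
        have hAA : A' = A := Fin.val_injective (by rw [hA, hA'])
        subst hAA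
        have hYeq : Y = U ++ [B, A'] ++ V ++ [A'] ++ T := by
          apply mval_inj
          rw [hY, hy]
          simp only [mval, map_append, hU, hV, hT]
          simp [hA', hB]
        exact Or.inr ⟨U, V, T, A', B, Fin.lt_def.2 (by rw [hA', hB]; exact hab), rfl, hYeq⟩
  | refl x =>
      intro X Y hX hY
      have : X = Y := mval_inj (by rw [hX, hY])
      exact this ▸ Relation.EqvGen.refl _
  | symm x y _ ih =>
      intro X Y hX hY
      exact Relation.EqvGen.symm _ _ (ih Y X hY hX)
  | trans x y z hxy _ ih1 ih2 =>
      intro X Z hX hZ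
      have hyn : ∀ a ∈ y, a < n := by
        intro a ha
        have hperm : x.Perm y := R_perm hxy
        have : a ∈ x := hperm.mem_iff.2 ha
        rw [← hX] at this
        obtain ⟨A, _, rfl⟩ := List.mem_map.1 this
        exact A.isLt
      obtain ⟨Y, hYv⟩ := exists_preimage hyn
      exact Relation.EqvGen.trans _ _ _ (ih1 X Y hX hYv) (ih2 Y Z hYv hZ)

end Hypo5
namespace Hypo6
open List Hypo Hypo2 Hypo3 Hypo4 Hypo5

lemma inv_le_count (a : ℕ) (u : List ℕ) : inv a u ≤ count (a+1) u := by
  unfold inv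
  have h := (takeWhile_prefix (fun z => decide (z ≠ a)) (l := u.reverse)).count_le (a+1)
  simpa [count_reverse] using h

lemma mval_count {n : ℕ} (w : List (Fin n)) (k : Fin n) : count k.val (mval w) = count k w :=
  count_map_of_injective w Fin.val Fin.val_injective k

lemma mval_pmap {n : ℕ} {x : List ℕ} (hx : ∀ a ∈ x, a < n) :
    mval (x.pmap (fun a h => (⟨a, h⟩ : Fin n)) hx) = x := by
  rw [mval, List.map_pmap]; simp

end Hypo6

/-- The number of hyposylvester classes of `m`-permutations of `n`
(words over `n` letters in which each letter appears exactly `m` times) is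
`(m+1)^(n-1)`. -/
theorem card_hyposylvester_classes_mPermutations (m n : ℕ) (hm : 1 ≤ m) :
    Nat.card
      (Quotient (Setoid.comap
        (Subtype.val : {w : List (Fin n) // ∀ k, w.count k = m} → List (Fin n))
        (Relation.EqvGen.setoid HypoStep))) = (m + 1) ^ (n - 1) := by
  classical
  open List Hypo Hypo2 Hypo3 Hypo4 Hypo5 Hypo6 in
  set T := {w : List (Fin n) // ∀ k, w.count k = m} with hT
  set Sd := Setoid.comap (Subtype.val : T → List (Fin n)) (Relation.EqvGen.setoid HypoStep) with hSd
  have hcount : ∀ (w : T) (t : ℕ) (ht : t < n), List.count t (mval w.val) = m := by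
    intro w t ht
    exact (mval_count w.1 ⟨t, ht⟩).trans (w.2 ⟨t, ht⟩)
  have hmperm : ∀ w : T, IsMPerm m n (mval w.val) := by
    intro w
    refine ⟨?_, fun t ht => hcount w t ht⟩
    intro a ha
    obtain ⟨A, _, rfl⟩ := List.mem_map.1 ha
    exact A.isLt
  -- the invariant map
  have hblt : ∀ (w : T) (i : Fin (n-1)), inv i.val (mval w.val) < m + 1 := by
    intro w i
    have h1 := inv_le_count i.val (mval w.val)
    have h2 : List.count (i.val + 1) (mval w.val) = m := hcount w _ (by omega)
    omega
  set Φf : T → (Fin (n-1) → Fin (m+1)) :=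
    fun w i => ⟨inv i.val (mval w.val), hblt w i⟩ with hΦf
  have hresp : ∀ w w' : T, Sd.r w w' → Φf w = Φf w' := by
    intro w w' h
    funext i
    exact Fin.ext (R_inv (R_map h) i.val)
  set F : Quotient Sd → (Fin (n-1) → Fin (m+1)) := Quotient.lift Φf hresp with hF
  -- the canonical-word map
  set vfun : (Fin (n-1) → Fin (m+1)) → ℕ → ℕ :=
    fun v t => if h : t < n - 1 then (v ⟨t, h⟩).val else 0 with hvfun
  have hvle : ∀ v t, vfun v t ≤ m := by
    intro v t
    rw [hvfun]
    dsimp only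
    split
    · exact Nat.lt_succ_iff.1 (Fin.is_lt _)
    · omega
  set DF : (Fin (n-1) → Fin (m+1)) → List (Fin n) :=
    fun v => (D m (vfun v) n).pmap (fun a h => (⟨a, h⟩ : Fin n)) (D_mem m (vfun v) n) with hDF
  have hDFval : ∀ v, mval (DF v) = D m (vfun v) n := fun v => mval_pmap _
  have hDFcnt : ∀ v, ∀ k : Fin n, List.count k (DF v) = m := by
    intro v k
    rw [← mval_count, hDFval]
    exact D_count m (vfun v) (hvle v) n k.val k.isLt
  set G : (Fin (n-1) → Fin (m+1)) → Quotient Sd :=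
    fun v => Quotient.mk Sd ⟨DF v, hDFcnt v⟩ with hG
  have hleft : ∀ q, G (F q) = q := by
    refine Quotient.ind ?_
    intro w
    have hcomp := complete hm n (mval w.val) (hmperm w)
    have hDeq : D m (vfun (Φf w)) n = D m (fun t => inv t (mval w.val)) n := by
      refine D_congr m n ?_
      intro t ht
      rw [hvfun]
      dsimp only
      rw [dif_pos (show t < n - 1 by omega)]
    refine Quotient.sound ?_
    show Relation.EqvGen HypoStep (DF (Φf w)) w.val
    exact lift_eqv (Relation.EqvGen.symm _ _ hcomp) (DF (Φf w)) w.val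
      (by rw [hDFval, hDeq]) rfl
  have hright : ∀ v, F (G v) = v := by
    intro v
    funext i
    have h1 : inv i.val (mval (DF v)) = vfun v i.val := by
      rw [hDFval]
      exact D_inv m hm (vfun v) (hvle v) n i.val (by omega)
    refine Fin.ext ?_
    show inv i.val (mval (DF v)) = (v i).val
    rw [h1, hvfun]
    dsimp only
    rw [dif_pos i.isLt]
  have e : Quotient Sd ≃ (Fin (n-1) → Fin (m+1)) := ⟨F, G, hleft, hright⟩
  rw [Nat.card_congr e]
  simp [Nat.card_eq_fintype_card]
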